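/- arXiv:1909.10824 — 6 statements merged into one kernel-verified Lean document; each statement's English description precedes it below -/
import Mathlib

section
/- Branching bisimilarity is an equivalence relation: the relation relating states s and t iff there exists a branching bisimulation relation containing (s,t) is reflexive, symmetric, and transitive. -/
universe u v

variable {S : Type u} {Act : Type v}

/-- Reflexive-transitive closure of τ-steps: `t →τ ... →τ t'`. -/
def TauPath (tr : S → Act → S → Prop) (τ : Act) : S → S → Prop :=
  Relation.ReflTransGen (fun x y => tr x τ y)

/-- `R` is a branching bisimulation relation. -/
def IsBranchingBisim (tr : S → Act → S → Prop) (τ : Act) (R : S → S → Prop) : Prop :=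
  Symmetric R ∧
  ∀ s t a s', R s t → tr s a s' →
    (a = τ ∧ R s' t) ∨
    ∃ t' t'', TauPath tr τ t t' ∧ tr t' a t'' ∧ R s t' ∧ R s' t''

/-- Branching bisimilarity: related by some branching bisimulation. -/
def BranchingBisimilar (tr : S → Act → S → Prop) (τ : Act) (s t : S) : Prop :=
  ∃ R, IsBranchingBisim tr τ R ∧ R s t

/-- One τ-step staying inside the set `B`. -/
def StepIn (tr : S → Act → S → Prop) (τ : Act) (B : Set S) : S → S → Prop :=
  fun x y => x ∈ B ∧ y ∈ B ∧ tr x τ y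

/-- Semi-branching bisimulation (Basten). -/
def SemiBB (tr : S → Act → S → Prop) (τ : Act) (R : S → S → Prop) : Prop :=
  Symmetric R ∧
  ∀ s t a s', R s t → tr s a s' →
    (a = τ ∧ ∃ t', TauPath tr τ t t' ∧ R s t' ∧ R s' t') ∨
    ∃ t' t'', TauPath tr τ t t' ∧ tr t' a t'' ∧ R s t' ∧ R s' t''

/-- Semi-branching bisimilarity. -/
def SBB (tr : S → Act → S → Prop) (τ : Act) (s t : S) : Prop :=
  ∃ R, SemiBB tr τ R ∧ R s t

lemma branching_semi {tr : S → Act → S → Prop} {τ : Act} {R : S → S → Prop}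
    (h : IsBranchingBisim tr τ R) : SemiBB tr τ R := by
  obtain ⟨hs, ht⟩ := h
  refine ⟨hs, fun s t a s' hR hstep => ?_⟩
  rcases ht s t a s' hR hstep with ⟨rfl, h'⟩ | h'
  · exact Or.inl ⟨rfl, t, Relation.ReflTransGen.refl, hR, h'⟩
  · exact Or.inr h'

/-- Stuttering transfer of τ-paths across a semi-branching bisimulation. -/
lemma lemA {tr : S → Act → S → Prop} {τ : Act} {R : S → S → Prop} (h : SemiBB tr τ R) :
    ∀ {s s' t : S}, R s t → TauPath tr τ s s' → ∃ t', TauPath tr τ t t' ∧ R s' t' := by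
  intro s s' t hR hp
  induction hp with
  | refl => exact ⟨t, Relation.ReflTransGen.refl, hR⟩
  | tail hp hstep ih =>
    obtain ⟨v, hv, hRv⟩ := ih
    rcases h.2 _ _ _ _ hRv hstep with ⟨_, v', hvv', _, hR'⟩ | ⟨v', v'', hvv', hstep', _, hR''⟩
    · exact ⟨v', hv.trans hvv', hR'⟩
    · exact ⟨v'', Relation.ReflTransGen.tail (hv.trans hvv') hstep', hR''⟩

lemma sbb_semi (tr : S → Act → S → Prop) (τ : Act) : SemiBB tr τ (SBB tr τ) := by
  constructor
  · rintro s t ⟨R, hR, hst⟩; exact ⟨R, hR, hR.1 hst⟩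
  · rintro s t a s' ⟨R, hR, hst⟩ hstep
    rcases hR.2 s t a s' hst hstep with ⟨ha, t', hp, h1, h2⟩ | ⟨t', t'', hp, hs, h1, h2⟩
    · exact Or.inl ⟨ha, t', hp, ⟨R, hR, h1⟩, ⟨R, hR, h2⟩⟩
    · exact Or.inr ⟨t', t'', hp, hs, ⟨R, hR, h1⟩, ⟨R, hR, h2⟩⟩

lemma sbb_symm {tr : S → Act → S → Prop} {τ : Act} {s t : S} (h : SBB tr τ s t) :
    SBB tr τ t s := (sbb_semi tr τ).1 h

lemma sbb_trans {tr : S → Act → S → Prop} {τ : Act} {s t u : S}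
    (h1 : SBB tr τ s t) (h2 : SBB tr τ t u) : SBB tr τ s u := by
  have hE := sbb_semi tr τ
  refine ⟨fun x z => ∃ y, SBB tr τ x y ∧ SBB tr τ y z, ⟨?_, ?_⟩, t, h1, h2⟩
  · rintro x z ⟨y, hxy, hyz⟩; exact ⟨y, sbb_symm hyz, sbb_symm hxy⟩
  · rintro x z a x' ⟨y, hxy, hyz⟩ hstep
    rcases hE.2 x y a x' hxy hstep with ⟨ha, y', hp, h1', h2'⟩ | ⟨y', y'', hp, hs, h1', h2'⟩
    · obtain ⟨z', hz, hy'z'⟩ := lemA hE hyz hp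
      exact Or.inl ⟨ha, z', hz, ⟨y', h1', hy'z'⟩, ⟨y', h2', hy'z'⟩⟩
    · obtain ⟨z', hz, hy'z'⟩ := lemA hE hyz hp
      rcases hE.2 y' z' a y'' hy'z' hs with ⟨ha, z'', hz', h1'', h2''⟩ |
        ⟨z'', z''', hz', hs', h1'', h2''⟩
      · exact Or.inl ⟨ha, z'', hz.trans hz', ⟨y', h1', h1''⟩, ⟨y'', h2', h2''⟩⟩
      · exact Or.inr ⟨z'', z''', hz.trans hz', hs', ⟨y', h1', h1''⟩, ⟨y'', h2', h2''⟩⟩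

/-- The "state in the middle of a τ-path" relation. -/
def Dmid (tr : S → Act → S → Prop) (τ : Act) (p q : S) : Prop :=
  (∃ b, TauPath tr τ q b ∧ SBB tr τ p b) ∧ (∃ c, TauPath tr τ c q ∧ SBB tr τ p c)

lemma sbb_dmid {tr : S → Act → S → Prop} {τ : Act} {p q : S} (h : SBB tr τ p q) :
    Dmid tr τ p q :=
  ⟨⟨q, Relation.ReflTransGen.refl, h⟩, ⟨q, Relation.ReflTransGen.refl, h⟩⟩

/-- The stuttering lemma: `Dmid` (symmetrized) is a semi-branching bisimulation. -/
lemma stutter_semi (tr : S → Act → S → Prop) (τ : Act) :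
    SemiBB tr τ (fun p q => Dmid tr τ p q ∨ Dmid tr τ q p) := by
  have hE := sbb_semi tr τ
  constructor
  · rintro p q (h | h)
    · exact Or.inr h
    · exact Or.inl h
  · rintro p q a p' (⟨⟨b, hqb, hEpb⟩, _⟩ | ⟨_, ⟨c, hcp, hEqc⟩⟩) hstep
    · -- challenge from p, with q ⇒ b and SBB p b : match from b
      rcases hE.2 p b a p' hEpb hstep with ⟨ha, b₁, hp₁, h1, h2⟩ | ⟨b₁, b₂, hp₁, hs, h1, h2⟩
      · exact Or.inl ⟨ha, b₁, hqb.trans hp₁, Or.inl (sbb_dmid h1), Or.inl (sbb_dmid h2)⟩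
      · exact Or.inr ⟨b₁, b₂, hqb.trans hp₁, hs, Or.inl (sbb_dmid h1), Or.inl (sbb_dmid h2)⟩
    · -- challenge from p, with c ⇒ p and SBB q c
      obtain ⟨q₀, hqq₀, hpq₀⟩ := lemA hE (sbb_symm hEqc) hcp
      rcases hE.2 p q₀ a p' hpq₀ hstep with ⟨ha, q₁, hp₁, h1, h2⟩ | ⟨q₁, q₂, hp₁, hs, h1, h2⟩
      · exact Or.inl ⟨ha, q₁, hqq₀.trans hp₁, Or.inl (sbb_dmid h1), Or.inl (sbb_dmid h2)⟩
      · exact Or.inr ⟨q₁, q₂, hqq₀.trans hp₁, hs, Or.inl (sbb_dmid h1), Or.inl (sbb_dmid h2)⟩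

/-- Semi-branching bisimilarity is a (strict) branching bisimulation. -/
lemma sbb_branching (tr : S → Act → S → Prop) (τ : Act) :
    IsBranchingBisim tr τ (SBB tr τ) := by
  refine ⟨fun a b => sbb_symm, fun s t a s' hst hstep => ?_⟩
  rcases (sbb_semi tr τ).2 s t a s' hst hstep with ⟨rfl, t', hp, h1, h2⟩ |
    ⟨t', t'', hp, hs, h1', h2'⟩
  · rcases Relation.ReflTransGen.cases_tail hp with rfl | ⟨u, htu, hu⟩
    · exact Or.inl ⟨rfl, h2⟩
    · refine Or.inr ⟨u, t', htu, hu, ?_, h2⟩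
      exact ⟨_, stutter_semi tr _,
        Or.inl ⟨⟨t', Relation.ReflTransGen.single hu, h1⟩, ⟨t, htu, hst⟩⟩⟩
  · exact Or.inr ⟨t', t'', hp, hs, h1', h2'⟩

lemma id_bb (tr : S → Act → S → Prop) (τ : Act) :
    IsBranchingBisim tr τ (fun a b => a = b) := by
  refine ⟨fun a b h => h.symm, ?_⟩
  rintro s t a s' rfl hstep
  exact Or.inr ⟨s, s', Relation.ReflTransGen.refl, hstep, rfl, rfl⟩

theorem branchingBisimilar_equivalence (tr : S → Act → S → Prop) (τ : Act) :
    Equivalence (BranchingBisimilar tr τ) := by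
  have key : ∀ s t : S, BranchingBisimilar tr τ s t ↔ SBB tr τ s t := by
    intro s t
    constructor
    · rintro ⟨R, hR, h⟩; exact ⟨R, branching_semi hR, h⟩
    · intro h; exact ⟨SBB tr τ, sbb_branching tr τ, h⟩
  refine ⟨fun s => ⟨fun a b => a = b, id_bb tr τ, rfl⟩, ?_, ?_⟩
  · rintro s t ⟨R, hR, h⟩; exact ⟨R, hR, hR.1 h⟩
  · intro s t u h1 h2
    exact (key s u).2 (sbb_trans ((key s t).1 h1) ((key t u).1 h2))
end

section
/- Any two states lying on a common cycle of τ-transitions (i.e., in the same strongly connected component with respect to τ-transitions) are branching bisimilar. -/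
universe u v

variable {S : Type u} {Act : Type v}

theorem tauSCC_branchingBisimilar (tr : S → Act → S → Prop) (τ : Act) (s t : S)
    (hst : TauPath tr τ s t) (hts : TauPath tr τ t s) :
    BranchingBisimilar tr τ s t := by
  refine ⟨fun x y => TauPath tr τ x y ∧ TauPath tr τ y x, ⟨fun x y h => ⟨h.2, h.1⟩, ?_⟩, hst, hts⟩
  intro s t a s' hR hs
  right
  exact ⟨s, s', hR.2, hs, ⟨Relation.ReflTransGen.refl, Relation.ReflTransGen.refl⟩,
    ⟨Relation.ReflTransGen.refl, Relation.ReflTransGen.refl⟩⟩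
end

section
/- Let Π be a partition of the states of a finite LTS with no τ-cycles inside any block. Suppose Π is stable in the following strong sense: for every block B ∈ Π, every action a, every block B', and every transition s →a s' with s ∈ B, s' ∈ B' that is not inert (i.e., not both a = τ and B = B'), every bottom state t of B has a transition t →a t'' with t'' ∈ B'. Then the equivalence relation induced by Π is a branching bisimulation relation. -/
universe u v

variable {S : Type u} {Act : Type v}

lemma wf_of_no_cycle [Finite S] (r : S → S → Prop)
    (h : ∀ s, ¬ Relation.TransGen r s s) : WellFounded r := by
  have h1 : IsIrrefl S (Relation.TransGen r) := ⟨h⟩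
  have h2 : IsTrans S (Relation.TransGen r) := ⟨fun _ _ _ => Relation.TransGen.trans⟩
  have wf : WellFounded (Relation.TransGen r) :=
    Finite.wellFounded_of_trans_of_irrefl _
  exact Subrelation.wf (fun hxy => Relation.TransGen.single hxy) wf

lemma exists_bottom [Finite S] (tr : S → Act → S → Prop) (τ : Act) (B : Set S)
    (hnc : ∀ s, ¬ Relation.TransGen (StepIn tr τ B) s s)
    (t : S) (ht : t ∈ B) :
    ∃ t', Relation.ReflTransGen (StepIn tr τ B) t t' ∧ t' ∈ B ∧
      ∀ u ∈ B, ¬ tr t' τ u := by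
  have wf : WellFounded (fun x y => StepIn tr τ B y x) :=
    wf_of_no_cycle _ (fun s hs => hnc s ((Relation.transGen_swap).mp hs))
  induction t using wf.induction with
  | _ t ih =>
    by_cases hbot : ∀ u ∈ B, ¬ tr t τ u
    · exact ⟨t, Relation.ReflTransGen.refl, ht, hbot⟩
    · push_neg at hbot
      obtain ⟨u, hu, htu⟩ := hbot
      obtain ⟨t', hp, ht', hb⟩ := ih u ⟨ht, hu, htu⟩ hu
      exact ⟨t', Relation.ReflTransGen.head ⟨ht, hu, htu⟩ hp, ht', hb⟩

theorem stable_partition_isBranchingBisim [Finite S]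
    (tr : S → Act → S → Prop) (τ : Act)
    (P : Set (Set S)) (hP : Setoid.IsPartition P)
    (hnc : ∀ B ∈ P, ∀ s, ¬ Relation.TransGen (StepIn tr τ B) s s)
    (hstab : ∀ B ∈ P, ∀ B' ∈ P, ∀ (a : Act) (s s' : S), s ∈ B → s' ∈ B' → tr s a s' →
      ¬(a = τ ∧ B = B') →
      ∀ t ∈ B, (∀ u ∈ B, ¬ tr t τ u) → ∃ t'', tr t a t'' ∧ t'' ∈ B') :
    IsBranchingBisim tr τ (fun s t => ∃ B ∈ P, s ∈ B ∧ t ∈ B) := by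
  constructor
  · rintro s t ⟨B, hB, hs, ht⟩
    exact ⟨B, hB, ht, hs⟩
  · rintro s t a s' ⟨B, hB, hs, ht⟩ hstep
    obtain ⟨B', ⟨hB', hs'⟩, _⟩ := hP.2 s'
    by_cases hin : a = τ ∧ B = B'
    · exact Or.inl ⟨hin.1, B, hB, hin.2 ▸ hs', ht⟩
    · right
      obtain ⟨t', hpath, ht', hbot⟩ := exists_bottom tr τ B (hnc B hB) t ht
      obtain ⟨t'', htt'', ht''⟩ := hstab B hB B' hB' a s s' hs hs' hstep hin t' ht' hbot
      refine ⟨t', t'', ?_, htt'', ⟨B, hB, hs, ht'⟩, ⟨B', hB', hs', ht''⟩⟩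
      exact Relation.ReflTransGen.mono (fun x y (h : StepIn tr τ B x y) => h.2.2) _ _ hpath
end

section
/- Let R be a branching bisimulation relation that is also an equivalence, let s R t, and suppose s →τ s₁ →τ ... →τ sₙ →a s' is a path where all sᵢ are related to s by R and the final transition sₙ →a s' is not inert (¬(a = τ ∧ s' R sₙ)). Then there exists a path t →τ ... →τ t' →a t'' with s R t' and s' R t''. -/
universe u v

variable {S : Type u} {Act : Type v}

theorem inertly_reachable_transfer (tr : S → Act → S → Prop) (τ : Act)
    (R : S → S → Prop) (hR : IsBranchingBisim tr τ R) (hEq : Equivalence R)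
    (s t sn : S) (a : Act) (s' : S)
    (hst : R s t)
    (hpath : Relation.ReflTransGen (fun x y => tr x τ y ∧ R s y) s sn)
    (htr : tr sn a s')
    (hni : ¬(a = τ ∧ R s' sn)) :
    ∃ t' t'', TauPath tr τ t t' ∧ tr t' a t'' ∧ R s t' ∧ R s' t'' := by
  have hssn : R s sn := by
    rcases (Relation.ReflTransGen.cases_tail hpath) with h | ⟨c, _, hc⟩
    · exact h ▸ hEq.refl s
    · exact hc.2
  have hsnt : R sn t := hEq.trans (hEq.symm hssn) hst
  rcases hR.2 sn t a s' hsnt htr with ⟨ha, hrel⟩ | ⟨t', t'', h1, h2, h3, h4⟩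
  · exact absurd ⟨ha, hEq.trans hrel (hEq.symm hsnt)⟩ hni
  · exact ⟨t', t'', h1, h2, hEq.trans hssn h3, h4⟩
end

section
/- Contracting each τ-strongly-connected component of a finite LTS to a single state (removing resulting τ-self-loops) yields an LTS whose states are the SCC-classes and in which every state of the original LTS is branching bisimilar to (the representative of) its class, in the disjoint-union LTS of the original and the quotient. -/
universe u v

variable {S : Type u} {Act : Type v}

/-- The τ-strongly-connected-component equivalence. -/
def tauSCCSetoid (tr : S → Act → S → Prop) (τ : Act) : Setoid S where
  r s t := TauPath tr τ s t ∧ TauPath tr τ t s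
  iseqv := ⟨fun _ => ⟨Relation.ReflTransGen.refl, Relation.ReflTransGen.refl⟩,
    fun h => ⟨h.2, h.1⟩, fun h g => ⟨h.1.trans g.1, g.2.trans h.2⟩⟩

/-- The transition relation of the quotient LTS (τ-self-loops removed). -/
def quotTr (tr : S → Act → S → Prop) (τ : Act) :
    Quotient (tauSCCSetoid tr τ) → Act → Quotient (tauSCCSetoid tr τ) → Prop :=
  fun x a y =>
    (∃ u u', Quotient.mk (tauSCCSetoid tr τ) u = x ∧
      Quotient.mk (tauSCCSetoid tr τ) u' = y ∧ tr u a u') ∧ ¬(a = τ ∧ x = y)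

/-- The disjoint union of the original LTS and the quotient LTS. -/
def sumTr (tr : S → Act → S → Prop) (τ : Act) :
    (S ⊕ Quotient (tauSCCSetoid tr τ)) → Act → (S ⊕ Quotient (tauSCCSetoid tr τ)) → Prop :=
  fun x a y =>
    match x, y with
    | Sum.inl s, Sum.inl s' => tr s a s'
    | Sum.inr q, Sum.inr q' => quotTr tr τ q a q'
    | _, _ => False

lemma tauPath_inl (tr : S → Act → S → Prop) (τ : Act) {u v : S} (h : TauPath tr τ u v) :
    TauPath (sumTr tr τ) τ (Sum.inl u : S ⊕ Quotient (tauSCCSetoid tr τ)) (Sum.inl v) := by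
  induction h with
  | refl => exact Relation.ReflTransGen.refl
  | tail _ hstep ih => exact ih.tail hstep

theorem contract_tauSCC_bisimilar [Finite S] (tr : S → Act → S → Prop) (τ : Act) (s : S) :
    BranchingBisimilar (sumTr tr τ) τ (Sum.inl s)
      (Sum.inr (Quotient.mk (tauSCCSetoid tr τ) s)) := by
  refine ⟨fun x y =>
      (∃ u, x = Sum.inl u ∧ y = Sum.inr (Quotient.mk (tauSCCSetoid tr τ) u)) ∨
      (∃ u, x = Sum.inr (Quotient.mk (tauSCCSetoid tr τ) u) ∧ y = Sum.inl u),
    ⟨?_, ?_⟩, Or.inl ⟨s, rfl, rfl⟩⟩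
  · rintro x y (⟨u, rfl, rfl⟩ | ⟨u, rfl, rfl⟩)
    · exact Or.inr ⟨u, rfl, rfl⟩
    · exact Or.inl ⟨u, rfl, rfl⟩
  · rintro x y a x' (⟨u, rfl, rfl⟩ | ⟨u, rfl, rfl⟩) hstep
    · -- x = inl u, step in original LTS
      cases x' with
      | inr q => exact absurd hstep (by simp [sumTr])
      | inl u' =>
        have htr : tr u a u' := hstep
        by_cases hc : a = τ ∧ (Quotient.mk (tauSCCSetoid tr τ) u : Quotient _) =
            Quotient.mk (tauSCCSetoid tr τ) u'
        · exact Or.inl ⟨hc.1, Or.inl ⟨u', rfl, by rw [hc.2]⟩⟩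
        · refine Or.inr ⟨_, Sum.inr (Quotient.mk (tauSCCSetoid tr τ) u'),
            Relation.ReflTransGen.refl, ?_, Or.inl ⟨u, rfl, rfl⟩, Or.inl ⟨u', rfl, rfl⟩⟩
          exact ⟨⟨u, u', rfl, rfl, htr⟩, hc⟩
    · -- x = inr ⟦u⟧, step in quotient
      cases x' with
      | inl w => exact absurd hstep (by simp [sumTr])
      | inr q' =>
        obtain ⟨⟨v, v', hv, hv', htr⟩, _⟩ := hstep
        have hvu : TauPath tr τ u v := (Quotient.exact hv).2
        refine Or.inr ⟨Sum.inl v, Sum.inl v', tauPath_inl tr τ hvu, htr,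
          Or.inr ⟨v, by rw [hv], rfl⟩, Or.inr ⟨v', by rw [hv'], rfl⟩⟩
end

section
/- If every bunch in the transition partition consists of exactly one action-block-slice (i.e., all transitions in a bunch share the same action label and the same target block), the state partition is stable under the bunches (every bottom state of a block with a transition in a bunch has a transition in that bunch), there are no inert cycles within blocks, and all non-inert transitions with the same label, same source block and same target block are in the same bunch, then the equivalence induced by the state partition is a branching bisimulation. -/
universe u v

variable {S : Type u} {Act : Type v}

lemma exists_bottom_aux [Finite S] (r : S → S → Prop)
    (hnc : ∀ s, ¬ Relation.TransGen r s s) (t : S) :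
    ∃ t', Relation.ReflTransGen r t t' ∧ ∀ u, ¬ r t' u := by
  haveI : IsTrans S (flip (Relation.TransGen r)) :=
    ⟨fun a b c h1 h2 => Relation.TransGen.trans h2 h1⟩
  haveI : IsIrrefl S (flip (Relation.TransGen r)) := ⟨fun a h => hnc a h⟩
  have wf := Finite.wellFounded_of_trans_of_irrefl (flip (Relation.TransGen r))
  induction t using wf.induction with
  | _ t ih =>
    by_cases hb : ∀ u, ¬ r t u
    · exact ⟨t, Relation.ReflTransGen.refl, hb⟩
    · push_neg at hb
      obtain ⟨u, hu⟩ := hb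
      obtain ⟨t', hp, hbot⟩ := ih u (Relation.TransGen.single hu)
      exact ⟨t', Relation.ReflTransGen.head hu hp, hbot⟩

theorem trivial_bunches_isBranchingBisim [Finite S]
    (tr : S → Act → S → Prop) (τ : Act)
    (Ps : Set (Set S)) (hPs : Setoid.IsPartition Ps)
    (Pt : Set (Set (S × Act × S)))
    (hmem : ∀ T ∈ Pt, ∀ p ∈ T, tr p.1 p.2.1 p.2.2 ∧
        ¬(p.2.1 = τ ∧ ∃ B ∈ Ps, p.1 ∈ B ∧ p.2.2 ∈ B))
    (hcover : ∀ s a s', tr s a s' → ¬(a = τ ∧ ∃ B ∈ Ps, s ∈ B ∧ s' ∈ B) →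
        ∃ T ∈ Pt, (s, a, s') ∈ T)
    (hdisj : ∀ T ∈ Pt, ∀ T' ∈ Pt, T ≠ T' → Disjoint T T')
    (htrivial : ∀ T ∈ Pt, ∀ p ∈ T, ∀ q ∈ T,
        p.2.1 = q.2.1 ∧ ∃ B' ∈ Ps, p.2.2 ∈ B' ∧ q.2.2 ∈ B')
    (hstable : ∀ T ∈ Pt, ∀ B ∈ Ps, (∃ p ∈ T, p.1 ∈ B) →
        ∀ t ∈ B, (∀ u ∈ B, ¬ tr t τ u) → ∃ a t', (t, a, t') ∈ T)
    (hnc : ∀ B ∈ Ps, ∀ s, ¬ Relation.TransGen (StepIn tr τ B) s s)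
    (hcohesion : ∀ s a s' t t', tr s a s' → tr t a t' →
        ¬(a = τ ∧ ∃ B ∈ Ps, s ∈ B ∧ s' ∈ B) →
        ¬(a = τ ∧ ∃ B ∈ Ps, t ∈ B ∧ t' ∈ B) →
        (∃ B ∈ Ps, s ∈ B ∧ t ∈ B) → (∃ B ∈ Ps, s' ∈ B ∧ t' ∈ B) →
        ∀ T ∈ Pt, (s, a, s') ∈ T → (t, a, t') ∈ T) :
    IsBranchingBisim tr τ (fun s t => ∃ B ∈ Ps, s ∈ B ∧ t ∈ B) := by
  have huniq : ∀ B ∈ Ps, ∀ B' ∈ Ps, ∀ x, x ∈ B → x ∈ B' → B = B' := by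
    intro B hB B' hB' x hx hx'
    obtain ⟨b, _, hbu⟩ := hPs.2 x
    rw [hbu B ⟨hB, hx⟩, hbu B' ⟨hB', hx'⟩]
  constructor
  · rintro s t ⟨B, hB, hs, ht⟩; exact ⟨B, hB, ht, hs⟩
  intro s t a s' hR hstep
  obtain ⟨B, hB, hsB, htB⟩ := hR
  by_cases hinert : a = τ ∧ ∃ B' ∈ Ps, s ∈ B' ∧ s' ∈ B'
  · obtain ⟨ha, B', hB', hsB', hs'B'⟩ := hinert
    left
    refine ⟨ha, B, hB, ?_, htB⟩
    rwa [huniq B hB B' hB' s hsB hsB']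
  · right
    obtain ⟨T, hT, hpT⟩ := hcover s a s' hstep hinert
    -- find a bottom state of B reachable from t by inert steps
    obtain ⟨t', hpath, hbot⟩ :=
      exists_bottom_aux (StepIn tr τ B) (hnc B hB) t
    have ht'B : t' ∈ B := by
      rcases (Relation.reflTransGen_iff_eq_or_transGen.mp hpath) with h | h
      · rw [h]; exact htB
      · obtain ⟨c, -, -, ht'B, -⟩ := Relation.TransGen.tail'_iff.mp h
        exact ht'B
    have hbot' : ∀ u ∈ B, ¬ tr t' τ u := by
      intro u hu htr
      exact hbot u ⟨ht'B, hu, htr⟩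
    obtain ⟨a', t'', hT''⟩ :=
      hstable T hT B hB ⟨(s, a, s'), hpT, hsB⟩ t' ht'B hbot'
    obtain ⟨haa, B', hB', hs'B', ht''B'⟩ := htrivial T hT (s, a, s') hpT (t', a', t'') hT''
    have htr'' : tr t' a' t'' := (hmem T hT _ hT'').1
    refine ⟨t', t'', ?_, ?_, ⟨B, hB, hsB, ht'B⟩, ⟨B', hB', hs'B', ht''B'⟩⟩
    · exact Relation.ReflTransGen.mono (fun x y (h : StepIn tr τ B x y) => h.2.2) _ _ hpath
    · simp only [] at haa; rwa [← haa] at htr''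
end
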